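/- Let R be a ring satisfying Bass's stable rank condition (SR_r) and let n ≥ r. Then the subgroup EL_n(R) of GL_n(R) generated by elementary matrices acts transitively on the set of unimodular vectors in R^n. -/

import Mathlib

open Matrix

/-- A vector `v ∈ Rⁿ` is *unimodular* if some homomorphism of right `R`-modules
`φ : Rⁿ → R` sends it to `1`.  Right `R`-modules are encoded as modules over `Rᵐᵒᵖ`. -/
def IsUnimodular {n : ℕ} (R : Type) [Ring R] (v : Fin n → R) : Prop :=
  ∃ φ : (Fin n → R) →ₗ[Rᵐᵒᵖ] R, φ v = 1

/-- Bass's stable rank condition `(SR_r)`: for all `n ≥ r` and every unimodular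
`(c₁, …, cₙ) ∈ Rⁿ` there are `b₁, …, b_{n-1} ∈ R` such that
`(c₁ + b₁ cₙ, …, c_{n-1} + b_{n-1} cₙ)` is unimodular. -/
def SatisfiesSR (R : Type) [Ring R] (r : ℕ) : Prop :=
  ∀ n : ℕ, r ≤ n + 1 → ∀ c : Fin (n + 1) → R, IsUnimodular R c →
    ∃ b : Fin n → R,
      IsUnimodular R (fun i : Fin n => c i.castSucc + b i * c (Fin.last n))

/-- An elementary matrix differs from the identity at exactly one off-diagonal entry. -/
def IsElementaryMatrix {R : Type} [Ring R] {n : ℕ} (A : Matrix (Fin n) (Fin n) R) : Prop :=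
  ∃ i j : Fin n, i ≠ j ∧ ∃ x : R, A = 1 + Matrix.single i j x

/-- `EL_n(R)`: the subgroup of `GL_n(R)` generated by the elementary matrices. -/
def ElementarySubgroup (R : Type) [Ring R] (n : ℕ) : Subgroup ((Matrix (Fin n) (Fin n) R)ˣ) :=
  Subgroup.closure {M : (Matrix (Fin n) (Fin n) R)ˣ | IsElementaryMatrix M.val}

section aux
variable {R : Type} [Ring R] {N : ℕ}

def EquivEL (v w : Fin N → R) : Prop :=
  ∃ M ∈ ElementarySubgroup R N, M.val.mulVec v = w

lemma equivEL_refl (v : Fin N → R) : EquivEL v v :=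
  ⟨1, one_mem _, by simp⟩

lemma equivEL_trans {u v w : Fin N → R} (h1 : EquivEL u v) (h2 : EquivEL v w) :
    EquivEL u w := by
  obtain ⟨M, hM, hMe⟩ := h1
  obtain ⟨M', hM', hMe'⟩ := h2
  exact ⟨M' * M, mul_mem hM' hM, by rw [Units.val_mul, ← Matrix.mulVec_mulVec, hMe, hMe']⟩

lemma equivEL_symm {v w : Fin N → R} (h : EquivEL v w) : EquivEL w v := by
  obtain ⟨M, hM, hMe⟩ := h
  refine ⟨M⁻¹, inv_mem hM, ?_⟩
  rw [← hMe, Matrix.mulVec_mulVec, ← Units.val_mul, inv_mul_cancel M, Units.val_one,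
    Matrix.one_mulVec]

lemma elem_mul_elem (i j : Fin N) (hij : i ≠ j) (x y : R) :
    (1 + Matrix.single i j x) * (1 + Matrix.single i j y)
      = 1 + Matrix.single i j (x + y) := by
  have h0 : Matrix.single i j x * Matrix.single i j y = 0 :=
    Matrix.single_mul_single_of_ne (c := x) i j i (Ne.symm hij) y
  rw [Matrix.single_add]
  noncomm_ring [h0]

/-- the elementary transvection as a unit -/
def elemUnit (i j : Fin N) (hij : i ≠ j) (x : R) : (Matrix (Fin N) (Fin N) R)ˣ where
  val := 1 + Matrix.single i j x
  inv := 1 + Matrix.single i j (-x)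
  val_inv := by rw [elem_mul_elem i j hij]; simp
  inv_val := by rw [elem_mul_elem i j hij]; simp

lemma equivEL_step (i j : Fin N) (hij : i ≠ j) (x : R) (v : Fin N → R) :
    EquivEL v (Function.update v i (v i + x * v j)) := by
  refine ⟨elemUnit i j hij x, Subgroup.subset_closure ⟨i, j, hij, x, rfl⟩, ?_⟩
  funext k
  simp only [elemUnit, Matrix.add_mulVec, Matrix.one_mulVec, Pi.add_apply]
  rw [Function.update_apply]
  by_cases hk : k = i
  · subst hk
    simp [Matrix.mulVec, dotProduct, Matrix.single, Matrix.of_apply]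
  · simp [Matrix.mulVec, dotProduct, Matrix.single, Matrix.of_apply, hk,
      Ne.symm hk]

end aux

section aux2
variable {R : Type} [Ring R] {N : ℕ}

lemma multiAdd (t : Fin N) (c : Fin N → R) :
    ∀ l : List (Fin N), (∀ i ∈ l, i ≠ t) → l.Nodup → ∀ v : Fin N → R,
      EquivEL v (fun k => if k ∈ l then v k + c k * v t else v k) := by
  intro l
  induction l with
  | nil => intro _ _ v; simpa using equivEL_refl v
  | cons i l ih =>
    intro hne hnd v
    have hit : i ≠ t := hne i (List.mem_cons_self)
    have h1 := equivEL_step i t hit (c i) v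
    set v1 := Function.update v i (v i + c i * v t) with hv1
    have h2 := ih (fun j hj => hne j (List.mem_cons_of_mem _ hj)) hnd.of_cons v1
    have hil : i ∉ l := (List.nodup_cons.mp hnd).1
    have hvt : v1 t = v t := Function.update_of_ne (Ne.symm hit) _ _
    have key : (fun k => if k ∈ l then v1 k + c k * v1 t else v1 k)
        = fun k => if k ∈ i :: l then v k + c k * v t else v k := by
      funext k
      by_cases hk : k ∈ l
      · have hki : k ≠ i := fun h => hil (h ▸ hk)
        simp [hk, hki, List.mem_cons, hv1, Function.update_of_ne hki, Function.update_of_ne (Ne.symm hit)]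
      · by_cases hk2 : k = i
        · subst hk2
          simp [hk, hv1, hil]
        · simp [hk, hk2, hv1, Function.update_of_ne hk2]
    rw [key] at h2
    exact equivEL_trans h1 h2

lemma multiAdd2 (t : Fin N) (c : Fin N → R) :
    ∀ l : List (Fin N), (∀ i ∈ l, i ≠ t) → ∀ v : Fin N → R,
      EquivEL v (Function.update v t (v t + (l.map (fun i => c i * v i)).sum)) := by
  intro l
  induction l with
  | nil =>
    intro _ v
    simpa using equivEL_refl v
  | cons i l ih =>
    intro hne v
    have hit : i ≠ t := hne i (List.mem_cons_self)
    have h1 := equivEL_step t i (Ne.symm hit) (c i) v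
    set v1 := Function.update v t (v t + c i * v i) with hv1
    have h2 := ih (fun j hj => hne j (List.mem_cons_of_mem _ hj)) v1
    have hmap : l.map (fun j => c j * v1 j) = l.map (fun j => c j * v j) := by
      apply List.map_congr_left
      intro j hj
      rw [hv1, Function.update_of_ne (hne j (List.mem_cons_of_mem _ hj))]
    have hv1t : v1 t = v t + c i * v i := Function.update_self _ _ _
    rw [hmap, hv1t] at h2
    have key : Function.update v1 t (v t + c i * v i + (l.map fun j => c j * v j).sum)
        = Function.update v t (v t + ((i :: l).map fun j => c j * v j).sum) := by
      rw [hv1, Function.update_idem, List.map_cons, List.sum_cons, add_assoc]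
    rw [key] at h2
    exact equivEL_trans h1 h2

lemma unimodular_sum {k : ℕ} {u : Fin k → R} (h : IsUnimodular R u) :
    ∃ a : Fin k → R, ∑ i, a i * u i = 1 := by
  obtain ⟨φ, hφ⟩ := h
  refine ⟨fun i => φ (Pi.single i 1), ?_⟩
  have hu : u = ∑ i, MulOpposite.op (u i) • Pi.single i (1 : R) := by
    funext j
    simp [Finset.sum_apply, Pi.single_apply, MulOpposite.smul_eq_mul_unop]
  have key : φ u = ∑ i, φ (Pi.single i 1) * u i := by
    conv_lhs => rw [hu]
    rw [map_sum]
    simp [MulOpposite.smul_eq_mul_unop]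
  rw [← key, hφ]

end aux2

section main
variable {R : Type} [Ring R]

lemma zero_eq_one_of_unimodular_nil {v : Fin 0 → R} (h : IsUnimodular R v) : (0 : R) = 1 := by
  obtain ⟨φ, hφ⟩ := h
  have hv0 : v = 0 := funext fun i => i.elim0
  rw [hv0, map_zero] at hφ
  exact hφ

lemma reduce_to_e {m : ℕ} (r : ℕ) (hSR : SatisfiesSR R r) (hr : r ≤ m + 2)
    (v : Fin (m + 2) → R) (hv : IsUnimodular R v) :
    EquivEL v (Fin.snoc 0 1) := by
  set L : Fin (m + 2) := Fin.last (m + 1) with hL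
  obtain ⟨b, hb⟩ := hSR (m + 1) (by omega) v hv
  set u : Fin (m + 1) → R := fun i => v i.castSucc + b i * v L with hu
  set l : List (Fin (m + 2)) := (List.finRange (m + 1)).map Fin.castSucc with hl
  have hmem : ∀ k : Fin (m + 2), k ∈ l ↔ k ≠ L := by
    intro k
    constructor
    · rintro hk rfl
      simp only [hl, List.mem_map] at hk
      obtain ⟨j, _, hj⟩ := hk
      exact absurd hj (Fin.castSucc_lt_last j).ne
    · intro hk
      simp only [hl, List.mem_map]
      exact ⟨k.castPred hk, List.mem_finRange _, Fin.castSucc_castPred k hk⟩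
  have hne : ∀ i ∈ l, i ≠ L := fun i hi => (hmem i).mp hi
  have hnd : l.Nodup := (List.nodup_finRange _).map (Fin.castSucc_injective _)
  -- step 1 : add b i * v L to each non-last coordinate
  have h1 := multiAdd L (Fin.snoc b 0) l hne hnd v
  have e1 : (fun k => if k ∈ l then v k + (Fin.snoc b 0 : Fin (m + 2) → R) k * v L else v k)
      = Fin.snoc u (v L) := by
    funext k
    induction k using Fin.lastCases with
    | last =>
      rw [if_neg (fun h => (hmem L).mp h rfl), ← hL, Fin.snoc_last]
    | cast j =>
      rw [if_pos ((hmem _).mpr (Fin.castSucc_lt_last j).ne), Fin.snoc_castSucc,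
        Fin.snoc_castSucc, hu]
  rw [e1] at h1
  -- the shortened vector is unimodular
  obtain ⟨a, ha⟩ := unimodular_sum hb
  -- step 2 : make the last coordinate 1
  have h2 := multiAdd2 L (Fin.snoc (fun i => (1 - v L) * a i) 0) l hne (Fin.snoc u (v L))
  have hsum : (l.map fun i => (Fin.snoc (fun i => (1 - v L) * a i) 0 : Fin (m + 2) → R) i * (Fin.snoc u (v L) : Fin (m + 2) → R) i).sum
      = 1 - v L := by
    rw [hl, List.map_map]
    have : ((fun i => (Fin.snoc (fun i => (1 - v L) * a i) 0 : Fin (m + 2) → R) i * (Fin.snoc u (v L) : Fin (m + 2) → R) i)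
        ∘ Fin.castSucc) = fun j => (1 - v L) * (a j * u j) := by
      funext j
      simp [Function.comp, Fin.snoc_castSucc, mul_assoc]
    rw [this, ← Fin.sum_univ_def, ← Finset.mul_sum]
    have ha' : ∑ j, a j * u j = 1 := by rw [← ha]
    rw [ha', mul_one]
  rw [hsum] at h2
  have e2 : Function.update (Fin.snoc u (v L) : Fin (m + 2) → R) L ((Fin.snoc u (v L) : Fin (m + 2) → R) L + (1 - v L))
      = Fin.snoc u 1 := by
    rw [Fin.snoc_last]
    funext k
    induction k using Fin.lastCases with
    | last => rw [Function.update_self, Fin.snoc_last, add_comm, sub_add_cancel]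
    | cast j =>
      rw [Function.update_of_ne (Fin.castSucc_lt_last j).ne, Fin.snoc_castSucc, Fin.snoc_castSucc]
  rw [e2] at h2
  -- step 3 : clear the other coordinates
  have h3 := multiAdd L (Fin.snoc (fun i => -(u i)) 0) l hne hnd (Fin.snoc u 1)
  have e3 : (fun k => if k ∈ l then (Fin.snoc u 1 : Fin (m + 2) → R) k
        + (Fin.snoc (fun i => -(u i)) 0 : Fin (m + 2) → R) k * (Fin.snoc u 1 : Fin (m + 2) → R) L
        else (Fin.snoc u 1 : Fin (m + 2) → R) k)
      = (Fin.snoc 0 1 : Fin (m + 2) → R) := by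
    funext k
    induction k using Fin.lastCases with
    | last =>
      rw [if_neg (fun h => (hmem L).mp h rfl), ← hL, Fin.snoc_last, Fin.snoc_last]
    | cast j =>
      rw [if_pos ((hmem _).mpr (Fin.castSucc_lt_last j).ne), hL, Fin.snoc_last,
        Fin.snoc_castSucc, Fin.snoc_castSucc, Fin.snoc_castSucc, mul_one, add_neg_cancel]
      simp
  rw [e3] at h3
  exact equivEL_trans h1 (equivEL_trans h2 h3)

end main

/-- If `R` satisfies `(SR_r)` and `n ≥ r`, then `EL_n(R)` acts transitively on the
unimodular vectors in `Rⁿ` (acting on column vectors on the left). -/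
theorem elementarySubgroup_transitive_on_unimodular (R : Type) [Ring R] (r n : ℕ)
    (hSR : SatisfiesSR R r) (hn : r ≤ n) (v w : Fin n → R)
    (hv : IsUnimodular R v) (hw : IsUnimodular R w) :
    ∃ M ∈ ElementarySubgroup R n, M.val.mulVec v = w := by
  have triv : (0 : R) = 1 → ∃ M ∈ ElementarySubgroup R n, M.val.mulVec v = w := by
    intro h01
    haveI : Subsingleton R := subsingleton_of_zero_eq_one h01
    exact ⟨1, one_mem _, funext fun k => Subsingleton.elim _ _⟩
  obtain _ | _ | m := n
  · exact triv (zero_eq_one_of_unimodular_nil hv)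
  · obtain ⟨b, hb⟩ := hSR 0 (by omega) v hv
    exact triv (zero_eq_one_of_unimodular_nil hb)
  · have h1 := reduce_to_e r hSR hn v hv
    have h2 := reduce_to_e r hSR hn w hw
    exact equivEL_trans h1 (equivEL_symm h2)
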